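/- Let p be a positive natural number, E := EuclideanSpace ℝ (Fin p), and let (Ω, 𝒜, μ) be a probability space with a filtration (ℱ_k)_{k∈ℕ}. Let L, σ, c, b, b₀, B₃ > 0, and set b̃ := b₀·c² + b·B₃/c. Let f : E → ℝ be differentiable with L-Lipschitz gradient and bounded below by f* ∈ ℝ. Let γ ∈ (1/2, 1], 0 < α ≤ 1/(4·L), and set α_k := α/(k+1)^γ. Suppose random sequences θ_k, r_k, b_k : Ω → E satisfy: θ_0 deterministic; θ_{k+1} = θ_k − α_k • (∇f(θ_k) + r_k + b_k); θ_k and b_k are ℱ_k-measurable; r_k is ℱ_{k+1}-measurable, integrable with square-integrable norm; E[r_k | ℱ_k] = 0 a.s.; E[‖r_k‖² | ℱ_k] ≤ σ²·B₃²/c² a.s.; ‖b_k‖ ≤ b̃ a.s.; and each θ_k has square-integrable norm with f(θ_k) integrable. Then for every K ≥ 1, writing S_K := Σ_{k=0}^{K−1} α_k and Q_K := Σ_{k=0}^{K−1} α_k², the stepsize-weighted average satisfies (1/S_K)·Σ_{k=0}^{K−1} α_k·E[‖∇f(θ_k)‖²] ≤ 4·(f(θ_0) − f*)/S_K + 2·L·(σ²·B₃²/c²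 + 2·b̃²)·Q_K/S_K + 2·b̃². -/

import Mathlib

open MeasureTheory
open scoped RealInnerProductSpace

/-- Descent lemma for `L`-smooth functions. -/
lemma smooth_descent {F : Type*} [NormedAddCommGroup F] [InnerProductSpace ℝ F] [CompleteSpace F]
    (f : F → ℝ) (L : ℝ) (hL : 0 ≤ L) (hf : Differentiable ℝ f)
    (hLip : ∀ x y, ‖gradient f x - gradient f y‖ ≤ L * ‖x - y‖) (x y : F) :
    f y ≤ f x + ⟪gradient f x, y - x⟫ + L / 2 * ‖y - x‖ ^ 2 := by
  set v := y - x with hv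
  set φ : ℝ → ℝ := fun t => f x + t * ⟪gradient f x, v⟫ + L / 2 * t ^ 2 * ‖v‖ ^ 2
      - f (x + t • v) with hφ
  have hfd : ∀ z : F, HasFDerivAt f (InnerProductSpace.toDual ℝ F (gradient f z)) z :=
    fun z => (hf z).hasGradientAt.hasFDerivAt
  have hφd : ∀ t : ℝ, HasDerivAt φ
      (⟪gradient f x, v⟫ + L * t * ‖v‖ ^ 2 - ⟪gradient f (x + t • v), v⟫) t := by
    intro t
    have hline : HasDerivAt (fun t : ℝ => x + t • v) v t :=
      by simpa using ((hasDerivAt_id t).smul_const v).const_add x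
    have hcomp : HasDerivAt (fun t : ℝ => f (x + t • v))
        (⟪gradient f (x + t • v), v⟫) t := by
      have := (hfd (x + t • v)).comp_hasDerivAt t hline
      simpa [InnerProductSpace.toDual_apply_apply, Function.comp_def] using this
    have h1 : HasDerivAt (fun t : ℝ => f x + t * ⟪gradient f x, v⟫
        + L / 2 * t ^ 2 * ‖v‖ ^ 2) (⟪gradient f x, v⟫ + L * t * ‖v‖ ^ 2) t := by
      have ha : HasDerivAt (fun t : ℝ => t * ⟪gradient f x, v⟫)
          (⟪gradient f x, v⟫) t := by
        simpa using (hasDerivAt_id t).mul_const (⟪gradient f x, v⟫)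
      have hb : HasDerivAt (fun t : ℝ => L / 2 * t ^ 2 * ‖v‖ ^ 2)
          (L * t * ‖v‖ ^ 2) t := by
        have : HasDerivAt (fun t : ℝ => t ^ 2) (2 * t) t := by
          simpa using hasDerivAt_pow 2 t
        have := (this.const_mul (L / 2)).mul_const (‖v‖ ^ 2)
        rw [show L * t * ‖v‖ ^ 2 = L / 2 * (2 * t) * ‖v‖ ^ 2 by ring]
        exact this
      simpa [add_assoc, Pi.add_def] using ((ha.const_add (f x)).add hb)
    simpa [Pi.sub_def, hφ] using h1.sub hcomp
  have hderiv : ∀ t : ℝ, deriv φ t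
      = ⟪gradient f x, v⟫ + L * t * ‖v‖ ^ 2 - ⟪gradient f (x + t • v), v⟫ :=
    fun t => (hφd t).deriv
  have hmono : MonotoneOn φ (Set.Icc (0 : ℝ) 1) := by
    apply monotoneOn_of_deriv_nonneg (convex_Icc 0 1)
    · exact fun t _ => ((hφd t).continuousAt).continuousWithinAt
    · exact fun t _ => ((hφd t).differentiableAt).differentiableWithinAt
    · intro t ht
      rw [interior_Icc] at ht
      rw [hderiv t]
      have h1 : ⟪gradient f x - gradient f (x + t • v), v⟫
          ≥ -(L * t * ‖v‖ ^ 2) := by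
        have hcs := abs_real_inner_le_norm (gradient f x - gradient f (x + t • v)) v
        have hl := hLip x (x + t • v)
        have : ‖x - (x + t • v)‖ = t * ‖v‖ := by
          rw [show x - (x + t • v) = -(t • v) by abel, norm_neg, norm_smul,
            Real.norm_eq_abs, abs_of_pos ht.1]
        rw [this] at hl
        nlinarith [neg_abs_le (⟪gradient f x - gradient f (x + t • v), v⟫),
          norm_nonneg v, ht.1.le]
      have : ⟪gradient f x, v⟫ - ⟪gradient f (x + t • v), v⟫
          = ⟪gradient f x - gradient f (x + t • v), v⟫ := by
        rw [inner_sub_left]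
      linarith [h1, this]
  have h01 := hmono (Set.left_mem_Icc.2 zero_le_one) (Set.right_mem_Icc.2 zero_le_one)
    zero_le_one
  have hφ0 : φ 0 = 0 := by simp [hφ]
  have hφ1 : φ 1 = f x + ⟪gradient f x, v⟫ + L / 2 * ‖v‖ ^ 2 - f y := by
    simp [hφ, hv]
  rw [hφ0, hφ1] at h01
  linarith


lemma abs_coord_le {p : ℕ} (x : EuclideanSpace ℝ (Fin p)) (i : Fin p) : |x i| ≤ ‖x‖ := by
  have h := abs_real_inner_le_norm (EuclideanSpace.single i (1 : ℝ)) x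
  rw [EuclideanSpace.inner_single_left, EuclideanSpace.norm_single] at h
  simpa using h

lemma integrable_of_sq {Ω : Type*} {mΩ : MeasurableSpace Ω} {μ : Measure Ω}
    [IsProbabilityMeasure μ] (h : Ω → ℝ) (hm : AEStronglyMeasurable h μ)
    (h2 : Integrable (fun ω => h ω ^ 2) μ) : Integrable h μ := by
  refine Integrable.mono' ((h2.add (integrable_const 1)).div_const 2) hm ?_
  filter_upwards with ω
  simp only [Pi.add_apply, Real.norm_eq_abs]
  nlinarith [sq_abs (h ω), sq_nonneg (|h ω| - 1)]

lemma integral_inner_zero {p : ℕ} {Ω : Type*} {m : MeasurableSpace Ω} {mΩ : MeasurableSpace Ω}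
    {μ : Measure Ω} [IsProbabilityMeasure μ] (hm : m ≤ mΩ)
    (g r : Ω → EuclideanSpace ℝ (Fin p))
    (hg : StronglyMeasurable[m] g) (hgsq : Integrable (fun ω => ‖g ω‖ ^ 2) μ)
    (hr : Integrable r μ) (hrsq : Integrable (fun ω => ‖r ω‖ ^ 2) μ)
    (hcond : μ[r|m] =ᵐ[μ] 0) :
    ∫ ω, ⟪g ω, r ω⟫ ∂μ = 0 := by
  haveI : SigmaFinite (μ.trim hm) := by infer_instance
  have hint : ∀ i : Fin p, Integrable (fun ω => g ω i * r ω i) μ := by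
    intro i
    refine Integrable.mono' ((hgsq.add hrsq).div_const 2)
      (((((EuclideanSpace.proj i)).continuous.comp_stronglyMeasurable
        (hg.mono hm)).aestronglyMeasurable).mul
        ((EuclideanSpace.proj i).continuous.comp_aestronglyMeasurable hr.1)) ?_
    filter_upwards with ω
    have h1 := abs_coord_le (g ω) i
    have h2 := abs_coord_le (r ω) i
    simp only [Pi.add_apply, Real.norm_eq_abs, abs_mul]
    nlinarith [abs_nonneg (g ω i), abs_nonneg (r ω i), sq_nonneg (|g ω i| - |r ω i|),
      sq_nonneg (‖g ω‖ - ‖r ω‖), norm_nonneg (g ω), norm_nonneg (r ω)]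
  have hri_cond : ∀ i : Fin p, μ[fun ω => r ω i|m] =ᵐ[μ] 0 := by
    intro i
    have hri : Integrable (fun ω => r ω i) μ :=
      (EuclideanSpace.proj (𝕜 := ℝ) i).integrable_comp hr
    have h0 : (0 : Ω → ℝ) =ᵐ[μ] μ[fun ω => r ω i|m] := by
      refine ae_eq_condExp_of_forall_setIntegral_eq hm hri
        (fun s _ _ => (integrable_zero _ _ μ).integrableOn) (fun s hs hμs => ?_)
        (StronglyMeasurable.aestronglyMeasurable stronglyMeasurable_zero)
      have h1 : ∫ ω in s, r ω i ∂μ = (EuclideanSpace.proj (𝕜 := ℝ) i) (∫ ω in s, r ω ∂μ) :=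
        (EuclideanSpace.proj (𝕜 := ℝ) i).integral_comp_comm hr.integrableOn
      have h2 : ∫ ω in s, r ω ∂μ = ∫ ω in s, (μ[r|m]) ω ∂μ :=
        (setIntegral_condExp hm hr hs).symm
      have h3 : ∫ ω in s, (μ[r|m]) ω ∂μ = 0 := by
        rw [integral_congr_ae (ae_restrict_of_ae hcond)]
        simp
      rw [h1, h2, h3]
      simp
    exact h0.symm
  have hkey : ∀ i : Fin p, ∫ ω, g ω i * r ω i ∂μ = 0 := by
    intro i
    have hgi : StronglyMeasurable[m] (fun ω => g ω i) :=
      (EuclideanSpace.proj (𝕜 := ℝ) i).continuous.comp_stronglyMeasurable hg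
    have hri : Integrable (fun ω => r ω i) μ :=
      (EuclideanSpace.proj (𝕜 := ℝ) i).integrable_comp hr
    have hpull : μ[(fun ω => g ω i) * (fun ω => r ω i)|m]
        =ᵐ[μ] (fun ω => g ω i) * μ[fun ω => r ω i|m] :=
      condExp_mul_of_stronglyMeasurable_left hgi (by exact hint i) hri
    have : ∫ ω, g ω i * r ω i ∂μ = ∫ ω, (μ[(fun ω => g ω i) * (fun ω => r ω i)|m]) ω ∂μ := by
      rw [integral_condExp hm]
      rfl
    rw [this, integral_congr_ae (hpull.trans ?_), integral_zero]
    filter_upwards [hri_cond i] with ω hω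
    simp [hω]
  have hexp : ∀ ω, ⟪g ω, r ω⟫ = ∑ i : Fin p, g ω i * r ω i := by
    intro ω
    simp [PiLp.inner_apply, RCLike.inner_apply, mul_comm]
  rw [integral_congr_ae (Filter.Eventually.of_forall hexp), integral_finset_sum _ fun i _ => hint i]
  simp [hkey]

set_option maxHeartbeats 1000000 in

theorem biased_spsa_diminishing_stepsize
    (p : ℕ) (hp : 0 < p)
    {Ω : Type*} {mΩ : MeasurableSpace Ω} {μ : Measure Ω} [IsProbabilityMeasure μ]
    (ℱ : Filtration ℕ mΩ)
    (L σ c b b₀ B₃ : ℝ) (hL : 0 < L) (hσ : 0 < σ) (hc : 0 < c) (hb : 0 < b)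
    (hb₀ : 0 < b₀) (hB₃ : 0 < B₃)
    (f : EuclideanSpace ℝ (Fin p) → ℝ) (fstar : ℝ)
    (hf : Differentiable ℝ f)
    (hLip : ∀ x y, ‖gradient f x - gradient f y‖ ≤ L * ‖x - y‖)
    (hflb : ∀ x, fstar ≤ f x)
    (γ : ℝ) (hγ : γ ∈ Set.Ioc (1 / 2 : ℝ) 1)
    (α : ℝ) (hα : 0 < α) (hαL : α ≤ 1 / (4 * L))
    (αk : ℕ → ℝ) (hαk : ∀ k, αk k = α / ((k : ℝ) + 1) ^ γ)
    (θ r bk : ℕ → Ω → EuclideanSpace ℝ (Fin p))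
    (θ0 : EuclideanSpace ℝ (Fin p)) (hθ0 : ∀ ω, θ 0 ω = θ0)
    (hrec : ∀ k ω, θ (k + 1) ω = θ k ω
      - αk k • (gradient f (θ k ω) + r k ω + bk k ω))
    (hθmeas : ∀ k, StronglyMeasurable[ℱ k] (θ k))
    (hbmeas : ∀ k, StronglyMeasurable[ℱ k] (bk k))
    (hrmeas : ∀ k, StronglyMeasurable[ℱ (k + 1)] (r k))
    (hrint : ∀ k, Integrable (r k) μ)
    (hrsq : ∀ k, Integrable (fun ω => ‖r k ω‖ ^ 2) μ)
    (hrcond : ∀ k, μ[r k|ℱ k] =ᵐ[μ] 0)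
    (hrvar : ∀ k, ∀ᵐ ω ∂μ,
      (μ[fun ω' => ‖r k ω'‖ ^ 2|ℱ k]) ω ≤ σ ^ 2 * B₃ ^ 2 / c ^ 2)
    (hbbd : ∀ k, ∀ᵐ ω ∂μ, ‖bk k ω‖ ≤ b₀ * c ^ 2 + b * B₃ / c)
    (hθsq : ∀ k, Integrable (fun ω => ‖θ k ω‖ ^ 2) μ)
    (hfint : ∀ k, Integrable (fun ω => f (θ k ω)) μ)
    (K : ℕ) (hK : 1 ≤ K) :
    (1 / ∑ k ∈ Finset.range K, αk k) *
        ∑ k ∈ Finset.range K, αk k * ∫ ω, ‖gradient f (θ k ω)‖ ^ 2 ∂μ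
      ≤ 4 * (f θ0 - fstar) / (∑ k ∈ Finset.range K, αk k)
        + 2 * L * (σ ^ 2 * B₃ ^ 2 / c ^ 2 + 2 * (b₀ * c ^ 2 + b * B₃ / c) ^ 2)
          * (∑ k ∈ Finset.range K, (αk k) ^ 2) / (∑ k ∈ Finset.range K, αk k)
        + 2 * (b₀ * c ^ 2 + b * B₃ / c) ^ 2 := by
  set b' : ℝ := b₀ * c ^ 2 + b * B₃ / c with hb'def
  set M : ℝ := σ ^ 2 * B₃ ^ 2 / c ^ 2 with hMdef
  have hb'pos : 0 < b' := by positivity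
  have hMpos : 0 < M := by positivity
  set M2 : ℝ := M + 2 * b' ^ 2 with hM2def
  have hM2pos : 0 < M2 := by positivity
  -- stepsize facts
  have hαkpos : ∀ k, 0 < αk k := by
    intro k; rw [hαk]
    have : (0:ℝ) < ((k:ℝ) + 1) ^ γ := Real.rpow_pos_of_pos (by positivity) γ
    positivity
  have hαkle : ∀ k, αk k ≤ α := by
    intro k; rw [hαk]
    have h1 : (1:ℝ) ≤ ((k:ℝ) + 1) ^ γ :=
      Real.one_le_rpow (by linarith [Nat.cast_nonneg (α := ℝ) k])
        (le_trans (by norm_num) hγ.1.le)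
    exact div_le_self hα.le h1
  have hLαk : ∀ k, L * αk k ≤ 1 / 4 := by
    intro k
    have h1 : L * αk k ≤ L * α := by
      apply mul_le_mul_of_nonneg_left (hαkle k) hL.le
    have h2 : L * α ≤ L * (1 / (4 * L)) := mul_le_mul_of_nonneg_left hαL hL.le
    have h3 : L * (1 / (4 * L)) = 1 / 4 := by field_simp
    linarith
  -- gradient measurability and integrability
  have hgradcont : Continuous (gradient f) := by
    have hlw : LipschitzWith (Real.toNNReal L) (gradient f) := by
      apply LipschitzWith.of_dist_le_mul
      intro x y
      rw [dist_eq_norm, dist_eq_norm, Real.coe_toNNReal _ hL.le]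
      exact hLip x y
    exact hlw.continuous
  have hGF : ∀ k, StronglyMeasurable[ℱ k] (fun ω => gradient f (θ k ω)) :=
    fun k => hgradcont.comp_stronglyMeasurable (hθmeas k)
  have hGa : ∀ k, AEStronglyMeasurable (fun ω => gradient f (θ k ω)) μ :=
    fun k => ((hGF k).mono (ℱ.le k)).aestronglyMeasurable
  have hGbd : ∀ k ω, ‖gradient f (θ k ω)‖ ≤ ‖gradient f 0‖ + L * ‖θ k ω‖ := by
    intro k ω
    have h1 := hLip (θ k ω) 0
    rw [sub_zero] at h1
    have h2 := norm_sub_norm_le (gradient f (θ k ω)) (gradient f 0)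
    linarith
  have hGsq : ∀ k, Integrable (fun ω => ‖gradient f (θ k ω)‖ ^ 2) μ := by
    intro k
    refine Integrable.mono'
      (g := fun ω => 2 * ‖gradient f 0‖ ^ 2 + 2 * L ^ 2 * ‖θ k ω‖ ^ 2)
      ((integrable_const _).add ((hθsq k).const_mul _))
      ((continuous_pow 2).comp_aestronglyMeasurable (hGa k).norm) ?_
    filter_upwards with ω
    rw [Real.norm_eq_abs, abs_of_nonneg (by positivity)]
    nlinarith [hGbd k ω, norm_nonneg (θ k ω), norm_nonneg (gradient f (θ k ω)),
      norm_nonneg (gradient f (0 : EuclideanSpace ℝ (Fin p))), hL.le,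
      sq_nonneg (‖gradient f 0‖ - L * ‖θ k ω‖)]
  have hGnorm_int : ∀ k, Integrable (fun ω => ‖gradient f (θ k ω)‖) μ :=
    fun k => integrable_of_sq _ (hGa k).norm (hGsq k)
  -- bias integrability
  have hba : ∀ k, AEStronglyMeasurable (bk k) μ :=
    fun k => ((hbmeas k).mono (ℱ.le k)).aestronglyMeasurable
  have hbint : ∀ k, Integrable (bk k) μ :=
    fun k => Integrable.mono' (integrable_const b') (hba k) (hbbd k)
  have hbsq : ∀ k, Integrable (fun ω => ‖bk k ω‖ ^ 2) μ := by
    intro k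
    refine Integrable.mono' (integrable_const (b' ^ 2))
      ((continuous_pow 2).comp_aestronglyMeasurable (hba k).norm) ?_
    filter_upwards [hbbd k] with ω hω
    rw [Real.norm_eq_abs, abs_of_nonneg (by positivity)]
    nlinarith [norm_nonneg (bk k ω)]
  -- nonnegativity of the second moments
  have hInn : ∀ k, 0 ≤ ∫ ω, ‖gradient f (θ k ω)‖ ^ 2 ∂μ :=
    fun k => integral_nonneg fun ω => by positivity
  -- key one step estimate
  have key : ∀ k, αk k / 2 * ∫ ω, ‖gradient f (θ k ω)‖ ^ 2 ∂μ
      ≤ (∫ ω, f (θ k ω) ∂μ) - (∫ ω, f (θ (k + 1) ω) ∂μ)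
        + αk k * b' ^ 2 + L * (αk k) ^ 2 / 2 * M2 := by
    intro k
    set a : ℝ := αk k with hadef
    have ha : 0 < a := hαkpos k
    set G : Ω → EuclideanSpace ℝ (Fin p) := fun ω => gradient f (θ k ω) with hGdef
    set u : Ω → EuclideanSpace ℝ (Fin p) := fun ω => G ω + r k ω + bk k ω with hudef
    -- integrability of the pieces
    have hGr_int : Integrable (fun ω => ⟪G ω, r k ω⟫) μ := by
      refine Integrable.mono' (((hGsq k).add (hrsq k)).div_const 2)
        ((hGa k).inner (hrint k).1) ?_
      filter_upwards with ω
      simp only [Pi.add_apply, Real.norm_eq_abs]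
      nlinarith [abs_real_inner_le_norm (G ω) (r k ω), norm_nonneg (G ω),
        norm_nonneg (r k ω), sq_nonneg (‖G ω‖ - ‖r k ω‖),
        abs_nonneg (⟪G ω, r k ω⟫)]
    have hGb_int : Integrable (fun ω => ⟪G ω, bk k ω⟫) μ := by
      refine Integrable.mono' ((hGnorm_int k).mul_const b')
        ((hGa k).inner (hba k)) ?_
      filter_upwards [hbbd k] with ω hω
      rw [Real.norm_eq_abs]
      calc |⟪G ω, bk k ω⟫| ≤ ‖G ω‖ * ‖bk k ω‖ := abs_real_inner_le_norm _ _
        _ ≤ ‖G ω‖ * b' := by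
            exact mul_le_mul_of_nonneg_left hω (norm_nonneg _)
    have hGu_eq : ∀ ω, ⟪G ω, u ω⟫ = ‖G ω‖ ^ 2 + ⟪G ω, r k ω⟫ + ⟪G ω, bk k ω⟫ := by
      intro ω
      rw [hudef]
      simp only [inner_add_right]
      rw [real_inner_self_eq_norm_sq]
    have hGu_int : Integrable (fun ω => ⟪G ω, u ω⟫) μ := by
      have := ((hGsq k).add hGr_int).add hGb_int
      refine this.congr ?_
      filter_upwards with ω
      simp only [Pi.add_apply]
      exact (hGu_eq ω).symm
    have hGbsum_sq : Integrable (fun ω => ‖G ω + bk k ω‖ ^ 2) μ := by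
      refine Integrable.mono'
        (g := fun ω => 2 * ‖G ω‖ ^ 2 + 2 * ‖bk k ω‖ ^ 2)
        (((hGsq k).const_mul 2).add ((hbsq k).const_mul 2))
        ((continuous_pow 2).comp_aestronglyMeasurable ((hGa k).add (hba k)).norm) ?_
      filter_upwards with ω
      rw [Real.norm_eq_abs, abs_of_nonneg (by positivity)]
      nlinarith [norm_add_le (G ω) (bk k ω), norm_nonneg (G ω), norm_nonneg (bk k ω),
        sq_nonneg (‖G ω‖ - ‖bk k ω‖), norm_nonneg (G ω + bk k ω)]
    have hGbr_int : Integrable (fun ω => ⟪G ω + bk k ω, r k ω⟫) μ := by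
      refine Integrable.mono' ((hGbsum_sq.add (hrsq k)).div_const 2)
        (((hGa k).add (hba k)).inner (hrint k).1) ?_
      filter_upwards with ω
      simp only [Pi.add_apply, Real.norm_eq_abs]
      nlinarith [abs_real_inner_le_norm (G ω + bk k ω) (r k ω),
        norm_nonneg (G ω + bk k ω), norm_nonneg (r k ω),
        sq_nonneg (‖G ω + bk k ω‖ - ‖r k ω‖), abs_nonneg (⟪G ω + bk k ω, r k ω⟫)]
    have husq_eq : ∀ ω, ‖u ω‖ ^ 2
        = ‖G ω + bk k ω‖ ^ 2 + 2 * ⟪G ω + bk k ω, r k ω⟫ + ‖r k ω‖ ^ 2 := by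
      intro ω
      have : u ω = (G ω + bk k ω) + r k ω := by rw [hudef]; ring_nf; abel
      rw [this, norm_add_sq_real]
    have husq_int : Integrable (fun ω => ‖u ω‖ ^ 2) μ := by
      have := (hGbsum_sq.add (hGbr_int.const_mul 2)).add (hrsq k)
      refine this.congr ?_
      filter_upwards with ω
      simp only [Pi.add_apply]
      rw [husq_eq ω]
    -- the three expectation identities / bounds
    have hX : ∫ ω, ⟪G ω, r k ω⟫ ∂μ = 0 :=
      integral_inner_zero (ℱ.le k) G (r k) (hGF k) (hGsq k) (hrint k) (hrsq k) (hrcond k)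
    have hY : ∫ ω, ⟪G ω + bk k ω, r k ω⟫ ∂μ = 0 :=
      integral_inner_zero (ℱ.le k) _ (r k) ((hGF k).add (hbmeas k))
        hGbsum_sq (hrint k) (hrsq k) (hrcond k)
    have hZ : -((∫ ω, ‖G ω‖ ^ 2 ∂μ) / 4) - b' ^ 2 ≤ ∫ ω, ⟪G ω, bk k ω⟫ ∂μ := by
      have h1 : ∫ ω, (-(‖G ω‖ ^ 2 / 4) - b' ^ 2) ∂μ ≤ ∫ ω, ⟪G ω, bk k ω⟫ ∂μ := by
        refine integral_mono_ae (((hGsq k).div_const 4).neg.sub (integrable_const _))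
          hGb_int ?_
        filter_upwards [hbbd k] with ω hω
        have h2 : |⟪G ω, bk k ω⟫| ≤ ‖G ω‖ * b' := by
          calc |⟪G ω, bk k ω⟫| ≤ ‖G ω‖ * ‖bk k ω‖ := abs_real_inner_le_norm _ _
            _ ≤ ‖G ω‖ * b' := mul_le_mul_of_nonneg_left hω (norm_nonneg _)
        have h3 : ‖G ω‖ * b' ≤ ‖G ω‖ ^ 2 / 4 + b' ^ 2 := by
          nlinarith [sq_nonneg (‖G ω‖ / 2 - b')]
        have h5 := neg_le_of_abs_le h2
        clear_value b' G
        linarith [h3, h5]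
      have h2 : ∫ ω, (-(‖G ω‖ ^ 2 / 4) - b' ^ 2) ∂μ
          = -((∫ ω, ‖G ω‖ ^ 2 ∂μ) / 4) - b' ^ 2 := by
        have h2a : ∫ ω, (-(‖G ω‖ ^ 2 / 4) - b' ^ 2) ∂μ
            = (∫ ω, -(‖G ω‖ ^ 2 / 4) ∂μ) - ∫ _, b' ^ 2 ∂μ :=
          integral_sub (((hGsq k).div_const 4).neg) (integrable_const _)
        have h2b : ∫ ω, -(‖G ω‖ ^ 2 / 4) ∂μ = -∫ ω, ‖G ω‖ ^ 2 / 4 ∂μ := integral_neg _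
        have h2c : ∫ ω, ‖G ω‖ ^ 2 / 4 ∂μ = (∫ ω, ‖G ω‖ ^ 2 ∂μ) / 4 := integral_div _ _
        rw [h2a, h2b, h2c, integral_const]
        simp
      linarith [h1, h2.symm.le]
    have hR : ∫ ω, ‖r k ω‖ ^ 2 ∂μ ≤ M := by
      have h1 : ∫ ω, ‖r k ω‖ ^ 2 ∂μ = ∫ ω, (μ[fun ω' => ‖r k ω'‖ ^ 2|ℱ k]) ω ∂μ :=
        (integral_condExp (ℱ.le k)).symm
      rw [h1]
      calc ∫ ω, (μ[fun ω' => ‖r k ω'‖ ^ 2|ℱ k]) ω ∂μ ≤ ∫ _, M ∂μ :=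
            integral_mono_ae integrable_condExp (integrable_const _) (hrvar k)
        _ = M := by simp
    have hGB : ∫ ω, ‖G ω + bk k ω‖ ^ 2 ∂μ
        ≤ 2 * (∫ ω, ‖G ω‖ ^ 2 ∂μ) + 2 * b' ^ 2 := by
      have h1 : ∫ ω, ‖G ω + bk k ω‖ ^ 2 ∂μ
          ≤ ∫ ω, (2 * ‖G ω‖ ^ 2 + 2 * b' ^ 2) ∂μ := by
        refine integral_mono_ae hGbsum_sq
          (((hGsq k).const_mul 2).add (integrable_const _)) ?_
        filter_upwards [hbbd k] with ω hω
        nlinarith [norm_add_le (G ω) (bk k ω), norm_nonneg (G ω), norm_nonneg (bk k ω),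
          sq_nonneg (‖G ω‖ - ‖bk k ω‖), norm_nonneg (G ω + bk k ω)]
      have h2 : ∫ ω, (2 * ‖G ω‖ ^ 2 + 2 * b' ^ 2) ∂μ
          = 2 * (∫ ω, ‖G ω‖ ^ 2 ∂μ) + 2 * b' ^ 2 := by
        have h2a : ∫ ω, (2 * ‖G ω‖ ^ 2 + 2 * b' ^ 2) ∂μ
            = (∫ ω, 2 * ‖G ω‖ ^ 2 ∂μ) + ∫ _, 2 * b' ^ 2 ∂μ :=
          integral_add ((hGsq k).const_mul 2) (integrable_const _)
        have h2b : ∫ ω, 2 * ‖G ω‖ ^ 2 ∂μ = 2 * ∫ ω, ‖G ω‖ ^ 2 ∂μ := integral_const_mul 2 _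
        rw [h2a, h2b, integral_const]
        simp
      linarith
    -- pointwise descent and integration
    have hptwise : ∀ ω, f (θ (k + 1) ω)
        ≤ f (θ k ω) - a * ⟪G ω, u ω⟫ + L * a ^ 2 / 2 * ‖u ω‖ ^ 2 := by
      intro ω
      have hd := smooth_descent f L hL.le hf hLip (θ k ω) (θ (k + 1) ω)
      have hdiff : θ (k + 1) ω - θ k ω = -(a • u ω) := by
        rw [hrec k ω, hudef, hGdef]
        abel
      rw [hdiff] at hd
      have hi : ⟪gradient f (θ k ω), -(a • u ω)⟫ = -(a * ⟪G ω, u ω⟫) := by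
        rw [inner_neg_right, real_inner_smul_right, hGdef]
      have hn : ‖-(a • u ω)‖ ^ 2 = a ^ 2 * ‖u ω‖ ^ 2 := by
        rw [norm_neg, norm_smul, Real.norm_eq_abs, mul_pow, sq_abs]
      rw [hi, hn] at hd
      calc f (θ (k + 1) ω) ≤ f (θ k ω) + -(a * ⟪G ω, u ω⟫)
            + L / 2 * (a ^ 2 * ‖u ω‖ ^ 2) := hd
        _ = f (θ k ω) - a * ⟪G ω, u ω⟫ + L * a ^ 2 / 2 * ‖u ω‖ ^ 2 := by ring
    have hstep : ∫ ω, f (θ (k + 1) ω) ∂μ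
        ≤ (∫ ω, f (θ k ω) ∂μ) - a * (∫ ω, ⟪G ω, u ω⟫ ∂μ)
          + L * a ^ 2 / 2 * (∫ ω, ‖u ω‖ ^ 2 ∂μ) := by
      have h1 : ∫ ω, f (θ (k + 1) ω) ∂μ
          ≤ ∫ ω, (f (θ k ω) - a * ⟪G ω, u ω⟫ + L * a ^ 2 / 2 * ‖u ω‖ ^ 2) ∂μ := by
        refine integral_mono_ae (hfint (k + 1))
          (((hfint k).sub (hGu_int.const_mul a)).add (husq_int.const_mul _)) ?_
        filter_upwards with ω
        exact hptwise ω
      have h2a : ∫ ω, (f (θ k ω) - a * ⟪G ω, u ω⟫ + L * a ^ 2 / 2 * ‖u ω‖ ^ 2) ∂μ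
          = (∫ ω, (f (θ k ω) - a * ⟪G ω, u ω⟫) ∂μ)
            + ∫ ω, L * a ^ 2 / 2 * ‖u ω‖ ^ 2 ∂μ :=
        integral_add ((hfint k).sub (hGu_int.const_mul a)) (husq_int.const_mul _)
      have h2b : ∫ ω, (f (θ k ω) - a * ⟪G ω, u ω⟫) ∂μ
          = (∫ ω, f (θ k ω) ∂μ) - ∫ ω, a * ⟪G ω, u ω⟫ ∂μ :=
        integral_sub (hfint k) (hGu_int.const_mul a)
      have h2c : ∫ ω, a * ⟪G ω, u ω⟫ ∂μ = a * ∫ ω, ⟪G ω, u ω⟫ ∂μ :=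
        integral_const_mul a _
      have h2d : ∫ ω, L * a ^ 2 / 2 * ‖u ω‖ ^ 2 ∂μ
          = L * a ^ 2 / 2 * ∫ ω, ‖u ω‖ ^ 2 ∂μ := integral_const_mul _ _
      rw [h2a, h2b, h2c, h2d] at h1
      linarith
    -- assemble
    set I : ℝ := ∫ ω, ‖G ω‖ ^ 2 ∂μ with hIdef
    have hI0 : 0 ≤ I := hInn k
    have hT1 : (3 / 4) * I - b' ^ 2 ≤ ∫ ω, ⟪G ω, u ω⟫ ∂μ := by
      have h1a : ∫ ω, (‖G ω‖ ^ 2 + ⟪G ω, r k ω⟫ + ⟪G ω, bk k ω⟫) ∂μ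
          = (∫ ω, (‖G ω‖ ^ 2 + ⟪G ω, r k ω⟫) ∂μ) + ∫ ω, ⟪G ω, bk k ω⟫ ∂μ :=
        integral_add ((hGsq k).add hGr_int) hGb_int
      have h1b : ∫ ω, (‖G ω‖ ^ 2 + ⟪G ω, r k ω⟫) ∂μ
          = (∫ ω, ‖G ω‖ ^ 2 ∂μ) + ∫ ω, ⟪G ω, r k ω⟫ ∂μ :=
        integral_add (hGsq k) hGr_int
      have h1 : ∫ ω, ⟪G ω, u ω⟫ ∂μ
          = I + (∫ ω, ⟪G ω, r k ω⟫ ∂μ) + ∫ ω, ⟪G ω, bk k ω⟫ ∂μ := by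
        rw [hIdef]
        rw [integral_congr_ae (Filter.Eventually.of_forall fun ω => hGu_eq ω), h1a, h1b]
      rw [h1, hX]
      linarith [hZ]
    have hT2 : ∫ ω, ‖u ω‖ ^ 2 ∂μ ≤ 2 * I + M2 := by
      have h1a : ∫ ω, (‖G ω + bk k ω‖ ^ 2 + 2 * ⟪G ω + bk k ω, r k ω⟫ + ‖r k ω‖ ^ 2) ∂μ
          = (∫ ω, (‖G ω + bk k ω‖ ^ 2 + 2 * ⟪G ω + bk k ω, r k ω⟫) ∂μ)
            + ∫ ω, ‖r k ω‖ ^ 2 ∂μ :=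
        integral_add (hGbsum_sq.add (hGbr_int.const_mul 2)) (hrsq k)
      have h1b : ∫ ω, (‖G ω + bk k ω‖ ^ 2 + 2 * ⟪G ω + bk k ω, r k ω⟫) ∂μ
          = (∫ ω, ‖G ω + bk k ω‖ ^ 2 ∂μ) + ∫ ω, 2 * ⟪G ω + bk k ω, r k ω⟫ ∂μ :=
        integral_add hGbsum_sq (hGbr_int.const_mul 2)
      have h1c : ∫ ω, 2 * ⟪G ω + bk k ω, r k ω⟫ ∂μ
          = 2 * ∫ ω, ⟪G ω + bk k ω, r k ω⟫ ∂μ := integral_const_mul 2 _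
      have h1 : ∫ ω, ‖u ω‖ ^ 2 ∂μ
          = (∫ ω, ‖G ω + bk k ω‖ ^ 2 ∂μ) + 2 * (∫ ω, ⟪G ω + bk k ω, r k ω⟫ ∂μ)
            + ∫ ω, ‖r k ω‖ ^ 2 ∂μ := by
        rw [integral_congr_ae (Filter.Eventually.of_forall fun ω => husq_eq ω), h1a, h1b, h1c]
      rw [h1, hY]
      rw [hM2def]
      linarith [hGB, hR]
    have hLa2 : L * a ^ 2 ≤ a / 4 := by
      have := hLαk k
      nlinarith [ha.le]
    have e1 : a * ((3 / 4) * I - b' ^ 2) ≤ a * (∫ ω, ⟪G ω, u ω⟫ ∂μ) :=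
      mul_le_mul_of_nonneg_left hT1 ha.le
    have e2 : L * a ^ 2 / 2 * (∫ ω, ‖u ω‖ ^ 2 ∂μ) ≤ L * a ^ 2 / 2 * (2 * I + M2) :=
      mul_le_mul_of_nonneg_left hT2 (by positivity)
    have e3 : L * a ^ 2 * I ≤ a / 4 * I := mul_le_mul_of_nonneg_right hLa2 hI0
    have r1 : a * (3 / 4 * I - b' ^ 2) = 3 / 4 * (a * I) - a * b' ^ 2 := by ring
    have r2 : L * a ^ 2 / 2 * (2 * I + M2) = L * a ^ 2 * I + L * a ^ 2 / 2 * M2 := by ring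
    have r3 : a / 4 * I = 1 / 4 * (a * I) := by ring
    have r4 : a / 2 * I = 1 / 2 * (a * I) := by ring
    rw [r1] at e1
    rw [r2] at e2
    rw [r3] at e3
    rw [hIdef] at r4 ⊢
    linarith [hstep, e1, e2, e3]
  -- telescoping sum
  set S : ℝ := ∑ k ∈ Finset.range K, αk k with hSdef
  set Q : ℝ := ∑ k ∈ Finset.range K, (αk k) ^ 2 with hQdef
  have hSpos : 0 < S := by
    rw [hSdef]
    apply Finset.sum_pos (fun k _ => hαkpos k)
    exact Finset.nonempty_range_iff.mpr (by omega)
  have hA0 : ∫ ω, f (θ 0 ω) ∂μ = f θ0 := by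
    have : (fun ω => f (θ 0 ω)) = fun _ => f θ0 := by
      funext ω; rw [hθ0]
    rw [this, integral_const]
    simp
  have hAK : fstar ≤ ∫ ω, f (θ K ω) ∂μ := by
    calc fstar = ∫ _, fstar ∂μ := by simp
      _ ≤ ∫ ω, f (θ K ω) ∂μ :=
        integral_mono (integrable_const _) (hfint K) fun ω => hflb _
  have hsum : ∑ k ∈ Finset.range K, αk k / 2 * ∫ ω, ‖gradient f (θ k ω)‖ ^ 2 ∂μ
      ≤ (f θ0 - fstar) + b' ^ 2 * S + L / 2 * M2 * Q := by
    calc ∑ k ∈ Finset.range K, αk k / 2 * ∫ ω, ‖gradient f (θ k ω)‖ ^ 2 ∂μ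
        ≤ ∑ k ∈ Finset.range K, ((∫ ω, f (θ k ω) ∂μ) - (∫ ω, f (θ (k + 1) ω) ∂μ)
            + αk k * b' ^ 2 + L * (αk k) ^ 2 / 2 * M2) :=
          Finset.sum_le_sum fun k _ => key k
      _ = ((∫ ω, f (θ 0 ω) ∂μ) - (∫ ω, f (θ K ω) ∂μ))
            + b' ^ 2 * S + L / 2 * M2 * Q := by
          rw [hSdef, hQdef]
          simp only [Finset.sum_add_distrib, Finset.sum_range_sub']
          rw [Finset.mul_sum, Finset.mul_sum]
          congr 1
          · congr 1
            · exact Finset.sum_congr rfl fun k _ => by ring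
          · exact Finset.sum_congr rfl fun k _ => by ring
      _ ≤ (f θ0 - fstar) + b' ^ 2 * S + L / 2 * M2 * Q := by
          rw [hA0] at *
          linarith [hAK]
  have hsum2 : ∑ k ∈ Finset.range K, αk k * ∫ ω, ‖gradient f (θ k ω)‖ ^ 2 ∂μ
      ≤ 2 * (f θ0 - fstar) + 2 * b' ^ 2 * S + L * M2 * Q := by
    have h1 : ∑ k ∈ Finset.range K, αk k * ∫ ω, ‖gradient f (θ k ω)‖ ^ 2 ∂μ
        = 2 * ∑ k ∈ Finset.range K, αk k / 2 * ∫ ω, ‖gradient f (θ k ω)‖ ^ 2 ∂μ := by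
      rw [Finset.mul_sum]
      exact Finset.sum_congr rfl fun k _ => by ring
    rw [h1]
    linarith [hsum]
  have hD : 0 ≤ f θ0 - fstar := by linarith [hflb θ0]
  have hQ0 : 0 ≤ Q := by
    rw [hQdef]; exact Finset.sum_nonneg fun k _ => sq_nonneg _
  have hfinal : ∑ k ∈ Finset.range K, αk k * ∫ ω, ‖gradient f (θ k ω)‖ ^ 2 ∂μ
      ≤ 4 * (f θ0 - fstar) + 2 * L * M2 * Q + 2 * b' ^ 2 * S := by
    have h0 : 0 ≤ L * M2 * Q := by positivity
    linarith [hsum2, hD, h0]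
  calc (1 / S) * ∑ k ∈ Finset.range K, αk k * ∫ ω, ‖gradient f (θ k ω)‖ ^ 2 ∂μ
      = (∑ k ∈ Finset.range K, αk k * ∫ ω, ‖gradient f (θ k ω)‖ ^ 2 ∂μ) / S := by
        rw [one_div, inv_mul_eq_div]
    _ ≤ (4 * (f θ0 - fstar) + 2 * L * M2 * Q + 2 * b' ^ 2 * S) / S :=
        (div_le_div_iff_of_pos_right hSpos).mpr hfinal
    _ = 4 * (f θ0 - fstar) / S + 2 * L * M2 * Q / S + 2 * b' ^ 2 := by
        field_simp
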